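/- arXiv:2201.06787 — 2 statements merged into one kernel-verified Lean document; each statement's English description precedes it below -/
import Mathlib

section
/- For the Adams-Bashforth coefficients γ_{ℓν} := ((-1)^{ν-1}/((ν-1)!(ℓ-ν)!)) ∫₀¹ ∏_{j=1, j≠ν}^{ℓ} (u+j-1) du, the sum of absolute values satisfies ∑_{ν=1}^{ℓ} |γ_{ℓν}| ≤ ℓ·2^{ℓ-1} for every ℓ ≥ 1. -/
open scoped BigOperators

/-- Adams-Bashforth coefficients
`γ_{ℓν} = ((-1)^{ν-1}/((ν-1)!(ℓ-ν)!)) ∫₀¹ ∏_{j=1, j≠ν}^{ℓ} (u+j-1) du`. -/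
noncomputable def adamsBashforthCoeff (ℓ ν : ℕ) : ℝ :=
  ((-1 : ℝ) ^ (ν - 1) / ((Nat.factorial (ν - 1)) * (Nat.factorial (ℓ - ν)))) *
    ∫ u in (0:ℝ)..1, ∏ j ∈ (Finset.Icc 1 ℓ).erase ν, (u + (j : ℝ) - 1)

lemma ab_prod_Icc (ℓ : ℕ) : ∏ x ∈ Finset.Icc 1 ℓ, x = Nat.factorial ℓ := by
  rw [← Finset.prod_range_add_one_eq_factorial, ← Finset.Ico_add_one_right_eq_Icc,
    Finset.prod_Ico_eq_prod_range]
  simp [Nat.add_comm]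

lemma ab_prod_eq (ℓ ν : ℕ) (h1 : 1 ≤ ν) (h2 : ν ≤ ℓ) :
    ∏ j ∈ (Finset.Icc 1 ℓ).erase ν, j
      = Nat.choose ℓ ν * (Nat.factorial (ν - 1) * Nat.factorial (ℓ - ν)) := by
  have hmem : ν ∈ Finset.Icc 1 ℓ := Finset.mem_Icc.mpr ⟨h1, h2⟩
  have key : ν * ∏ j ∈ (Finset.Icc 1 ℓ).erase ν, j = Nat.factorial ℓ := by
    have h := Finset.mul_prod_erase (Finset.Icc 1 ℓ) (fun j => j) hmem
    rw [h, ab_prod_Icc]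
  have key2 : ν * (Nat.choose ℓ ν * (Nat.factorial (ν - 1) * Nat.factorial (ℓ - ν)))
      = Nat.factorial ℓ := by
    have hfac : ν * Nat.factorial (ν - 1) = Nat.factorial ν :=
      Nat.mul_factorial_pred (by omega)
    calc ν * (Nat.choose ℓ ν * (Nat.factorial (ν - 1) * Nat.factorial (ℓ - ν)))
        = Nat.choose ℓ ν * (ν * Nat.factorial (ν - 1)) * Nat.factorial (ℓ - ν) := by ring
      _ = Nat.choose ℓ ν * Nat.factorial ν * Nat.factorial (ℓ - ν) := by rw [hfac]
      _ = Nat.factorial ℓ := Nat.choose_mul_factorial_mul_factorial h2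
  exact Nat.eq_of_mul_eq_mul_left h1 (key.trans key2.symm)

lemma ab_coeff_le (ℓ ν : ℕ) (h1 : 1 ≤ ν) (h2 : ν ≤ ℓ) :
    |adamsBashforthCoeff ℓ ν| ≤ (Nat.choose ℓ ν : ℝ) := by
  have hC : ∀ u ∈ Set.uIoc (0:ℝ) 1,
      ‖∏ j ∈ (Finset.Icc 1 ℓ).erase ν, (u + (j : ℝ) - 1)‖
        ≤ (∏ j ∈ (Finset.Icc 1 ℓ).erase ν, j : ℕ) := by
    intro u hu
    rw [Set.uIoc_of_le (by norm_num : (0:ℝ) ≤ 1)] at hu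
    obtain ⟨hu0, hu1⟩ := hu
    rw [Real.norm_eq_abs, Finset.abs_prod]
    push_cast
    apply Finset.prod_le_prod <;>
    · intro j hj
      have hj1 : 1 ≤ j := (Finset.mem_Icc.mp (Finset.mem_of_mem_erase hj)).1
      have : (1:ℝ) ≤ (j:ℝ) := by exact_mod_cast hj1
      rw [abs_of_nonneg (by linarith)]
      linarith
  have hint : ‖∫ u in (0:ℝ)..1, ∏ j ∈ (Finset.Icc 1 ℓ).erase ν, (u + (j : ℝ) - 1)‖
      ≤ (∏ j ∈ (Finset.Icc 1 ℓ).erase ν, j : ℕ) * |(1:ℝ) - 0| :=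
    intervalIntegral.norm_integral_le_of_norm_le_const hC
  have hint' : |∫ u in (0:ℝ)..1, ∏ j ∈ (Finset.Icc 1 ℓ).erase ν, (u + (j : ℝ) - 1)|
      ≤ ((∏ j ∈ (Finset.Icc 1 ℓ).erase ν, j : ℕ) : ℝ) := by
    rw [Real.norm_eq_abs] at hint
    simpa using hint
  unfold adamsBashforthCoeff
  rw [abs_mul, abs_div, abs_pow, abs_neg, abs_one, one_pow]
  have hden0 : (0:ℝ) < (Nat.factorial (ν - 1) : ℝ) * (Nat.factorial (ℓ - ν)) := by
    positivity
  rw [abs_of_pos hden0, div_mul_eq_mul_div, one_mul, div_le_iff₀ hden0]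
  calc |∫ u in (0:ℝ)..1, ∏ j ∈ (Finset.Icc 1 ℓ).erase ν, (u + (j : ℝ) - 1)|
      ≤ ((∏ j ∈ (Finset.Icc 1 ℓ).erase ν, j : ℕ) : ℝ) := hint'
    _ = (Nat.choose ℓ ν : ℝ) * ((Nat.factorial (ν - 1) : ℝ) * (Nat.factorial (ℓ - ν))) := by
        rw [ab_prod_eq ℓ ν h1 h2]; push_cast; ring

theorem sum_abs_adamsBashforthCoeff_le (ℓ : ℕ) (hℓ : 1 ≤ ℓ) :
    ∑ ν ∈ Finset.Icc 1 ℓ, |adamsBashforthCoeff ℓ ν| ≤ (ℓ : ℝ) * 2 ^ (ℓ - 1) := by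
  have step1 : ∑ ν ∈ Finset.Icc 1 ℓ, |adamsBashforthCoeff ℓ ν|
      ≤ ∑ ν ∈ Finset.Icc 1 ℓ, (Nat.choose ℓ ν : ℝ) := by
    apply Finset.sum_le_sum
    intro ν hν
    obtain ⟨h1, h2⟩ := Finset.mem_Icc.mp hν
    exact ab_coeff_le ℓ ν h1 h2
  have step2 : ∑ ν ∈ Finset.Icc 1 ℓ, Nat.choose ℓ ν + 1 = 2 ^ ℓ := by
    have h := Nat.sum_range_choose ℓ
    have hsplit : ∑ i ∈ Finset.range (ℓ + 1), Nat.choose ℓ i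
        = 1 + ∑ ν ∈ Finset.Icc 1 ℓ, Nat.choose ℓ ν := by
      rw [Finset.range_eq_Ico, Finset.sum_eq_sum_Ico_succ_bot (by omega),
        Finset.Ico_add_one_right_eq_Icc, Nat.choose_zero_right]
    rw [hsplit] at h
    omega
  have step3 : ∑ ν ∈ Finset.Icc 1 ℓ, Nat.choose ℓ ν ≤ ℓ * 2 ^ (ℓ - 1) := by
    rcases Nat.lt_or_ge ℓ 2 with h | h
    · interval_cases ℓ <;> simp
    · have hpow : 2 ^ ℓ = 2 * 2 ^ (ℓ - 1) := by
        rw [← pow_succ']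
        congr 1
        omega
      calc ∑ ν ∈ Finset.Icc 1 ℓ, Nat.choose ℓ ν
          ≤ 2 ^ ℓ := by omega
        _ = 2 * 2 ^ (ℓ - 1) := hpow
        _ ≤ ℓ * 2 ^ (ℓ - 1) := Nat.mul_le_mul_right _ h
  calc ∑ ν ∈ Finset.Icc 1 ℓ, |adamsBashforthCoeff ℓ ν|
      ≤ ∑ ν ∈ Finset.Icc 1 ℓ, (Nat.choose ℓ ν : ℝ) := step1
    _ = ((∑ ν ∈ Finset.Icc 1 ℓ, Nat.choose ℓ ν : ℕ) : ℝ) := by push_cast; ring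
    _ ≤ ((ℓ * 2 ^ (ℓ - 1) : ℕ) : ℝ) := by exact_mod_cast step3
    _ = (ℓ : ℝ) * 2 ^ (ℓ - 1) := by push_cast; ring
end

section
/- For the Adams-Moulton coefficients β_{ℓν} := ((-1)^ν/(ν!(ℓ-ν)!)) ∫₀¹ ∏_{j=0, j≠ν}^{ℓ} (u+j-1) du, the sum of absolute values satisfies ∑_{ν=0}^{ℓ} |β_{ℓν}| ≤ 2^{ℓ} for every ℓ ≥ 0. -/
open scoped BigOperators

/-- Adams-Moulton coefficients
`β_{ℓν} = ((-1)^ν/(ν!(ℓ-ν)!)) ∫₀¹ ∏_{j=0, j≠ν}^{ℓ} (u+j-1) du`. -/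
noncomputable def adamsMoultonCoeff (ℓ ν : ℕ) : ℝ :=
  ((-1 : ℝ) ^ ν / ((Nat.factorial ν) * (Nat.factorial (ℓ - ν)))) *
    ∫ u in (0:ℝ)..1, ∏ j ∈ (Finset.range (ℓ + 1)).erase ν, (u + (j : ℝ) - 1)

lemma prod_max_factorial (n : ℕ) :
    ∏ j ∈ Finset.range (n + 1), max j 1 = n.factorial := by
  induction n with
  | zero => simp
  | succ n ih =>
    rw [Finset.prod_range_succ, ih, max_eq_left (by omega), Nat.factorial_succ]
    ring

theorem sum_abs_adamsMoultonCoeff_le (ℓ : ℕ) :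
    ∑ ν ∈ Finset.range (ℓ + 1), |adamsMoultonCoeff ℓ ν| ≤ (2 : ℝ) ^ ℓ := by
  have hchoose : (∑ ν ∈ Finset.range (ℓ + 1), (ℓ.choose ν : ℝ)) = (2 : ℝ) ^ ℓ := by
    rw [← Nat.cast_sum, Nat.sum_range_choose]
    push_cast; ring
  rw [← hchoose]
  apply Finset.sum_le_sum
  intro ν hν
  rw [Finset.mem_range, Nat.lt_succ_iff] at hν
  unfold adamsMoultonCoeff
  rw [abs_mul]
  have hpos : (0 : ℝ) < (ν.factorial : ℝ) * ((ℓ - ν).factorial : ℝ) := by positivity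
  have h1 : |(-1 : ℝ) ^ ν / ((ν.factorial : ℝ) * ((ℓ - ν).factorial : ℝ))|
      = 1 / ((ν.factorial : ℝ) * ((ℓ - ν).factorial : ℝ)) := by
    rw [abs_div, abs_pow, abs_neg, abs_one, one_pow, abs_of_pos hpos]
  rw [h1]
  have hint : |∫ u in (0:ℝ)..1, ∏ j ∈ (Finset.range (ℓ + 1)).erase ν, (u + (j : ℝ) - 1)|
      ≤ (ℓ.factorial : ℝ) := by
    have key := intervalIntegral.norm_integral_le_of_norm_le_const
      (C := (ℓ.factorial : ℝ))
      (f := fun u => ∏ j ∈ (Finset.range (ℓ + 1)).erase ν, (u + (j : ℝ) - 1))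
      (a := (0:ℝ)) (b := 1) ?_
    · simpa using key
    · intro x hx
      rw [Set.uIoc_of_le (by norm_num : (0:ℝ) ≤ 1)] at hx
      obtain ⟨hx0, hx1⟩ := hx
      rw [Real.norm_eq_abs, Finset.abs_prod]
      calc ∏ j ∈ (Finset.range (ℓ + 1)).erase ν, |x + (j : ℝ) - 1|
          ≤ ∏ j ∈ (Finset.range (ℓ + 1)).erase ν, ((max j 1 : ℕ) : ℝ) := by
            apply Finset.prod_le_prod
            · intro i _; exact abs_nonneg _
            · intro i _
              rcases Nat.eq_zero_or_pos i with h | h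
              · subst h
                simp only [Nat.cast_zero, add_zero, max_eq_right (Nat.zero_le 1),
                  Nat.cast_one]
                rw [abs_of_nonpos (by linarith)]
                linarith
              · have hi : (1 : ℝ) ≤ (i : ℝ) := by exact_mod_cast h
                rw [max_eq_left h, abs_of_pos (by linarith)]
                linarith
        _ ≤ (ℓ.factorial : ℝ) := by
            rw [← Nat.cast_prod]
            have hn : ∏ j ∈ (Finset.range (ℓ + 1)).erase ν, max j 1 ≤ ℓ.factorial := by
              rw [← prod_max_factorial ℓ]
              exact Finset.prod_le_prod_of_subset_of_one_le' (Finset.erase_subset _ _)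
                (fun i _ _ => le_max_right i 1)
            exact_mod_cast hn
  calc 1 / ((ν.factorial : ℝ) * ((ℓ - ν).factorial : ℝ)) *
        |∫ u in (0:ℝ)..1, ∏ j ∈ (Finset.range (ℓ + 1)).erase ν, (u + (j : ℝ) - 1)|
      ≤ 1 / ((ν.factorial : ℝ) * ((ℓ - ν).factorial : ℝ)) * (ℓ.factorial : ℝ) := by
        gcongr
    _ = (ℓ.choose ν : ℝ) := by
        have heq : (ℓ.choose ν : ℝ) * ((ν.factorial : ℝ) * ((ℓ - ν).factorial : ℝ))
            = (ℓ.factorial : ℝ) := by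
          rw [← mul_assoc]
          exact_mod_cast Nat.choose_mul_factorial_mul_factorial hν
        field_simp
        linarith [heq]
end
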